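/- Let G be a countable group acting continuously on a Polish space X. Then there is a G-invariant Polish subspace Y ⊆ (2^ℕ)^G (i.e. a G-invariant G_δ subset of (2^ℕ)^G, where G acts by the left shift) and a continuous G-equivariant surjection from Y onto X. Furthermore, if X is compact then Y can be chosen to be compact. -/

import Mathlib

/-- The left shift action of `G` on the Bernoulli shift `K^G`. -/
def bshift {G : Type*} [Group G] (K : Type*) (g : G) (x : G → K) : G → K :=
  fun h => x (g⁻¹ * h)

open Filter Set Topology

namespace Stmt18Aux

instance : (uniformity Bool).IsCountablyGenerated := by
  rw [show (uniformity Bool) = Filter.principal SetRel.id from rfl]; infer_instance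


/-- Encoding of Baire space into Cantor space. -/
def enc (a : ℕ → ℕ) (m : ℕ) : Bool := decide (m.unpair.2 < a m.unpair.1)

/-- Partial decoding. -/
noncomputable def dec (y : ℕ → Bool) (n : ℕ) : ℕ := sInf {k | y (Nat.pair n k) = false}

/-- The image of the encoding, a Gδ set. -/
def S : Set (ℕ → Bool) :=
  {y | ∀ n, (∀ k, y (Nat.pair n (k + 1)) = true → y (Nat.pair n k) = true) ∧
    ∃ k, y (Nat.pair n k) = false}

lemma enc_continuous : Continuous enc := by
  apply continuous_pi
  intro m
  exact (continuous_of_discreteTopology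
    (f := fun v : ℕ => decide (m.unpair.2 < v))).comp (continuous_apply m.unpair.1)

lemma enc_mem (a : ℕ → ℕ) : enc a ∈ S := by
  intro n
  constructor
  · intro k hk
    simp only [enc, Nat.unpair_pair, decide_eq_true_eq] at hk ⊢
    omega
  · exact ⟨a n, by simp [enc, Nat.unpair_pair]⟩

lemma dec_eq (y : ℕ → Bool) (n a : ℕ) (h1 : ∀ k, k < a → y (Nat.pair n k) = true)
    (h2 : y (Nat.pair n a) = false) : dec y n = a := by
  have hne : {k | y (Nat.pair n k) = false}.Nonempty := ⟨a, h2⟩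
  have hm := Nat.sInf_mem hne
  refine le_antisymm (Nat.sInf_le h2) (le_of_not_gt fun h => ?_)
  have h' : y (Nat.pair n (dec y n)) = false := hm
  rw [h1 _ h] at h'
  exact Bool.noConfusion h'

lemma dec_enc (a : ℕ → ℕ) : dec (enc a) = a := by
  funext n
  exact dec_eq _ n (a n) (fun k hk => by simp [enc, Nat.unpair_pair, hk])
    (by simp [enc, Nat.unpair_pair])

lemma isGδ_S : IsGδ S := by
  have : S = ⋂ n : ℕ,
      ({y : ℕ → Bool | ∀ k, y (Nat.pair n (k + 1)) = true → y (Nat.pair n k) = true} ∩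
       {y : ℕ → Bool | ∃ k, y (Nat.pair n k) = false}) := by
    ext y; simp [S, forall_and]
  rw [this]
  refine IsGδ.iInter fun n => IsGδ.inter ?_ ?_
  · have hcl : IsClosed {y : ℕ → Bool | ∀ k, y (Nat.pair n (k + 1)) = true →
        y (Nat.pair n k) = true} := by
      have : {y : ℕ → Bool | ∀ k, y (Nat.pair n (k + 1)) = true → y (Nat.pair n k) = true} =
          ⋂ k : ℕ, ((fun y : ℕ → Bool => y (Nat.pair n (k + 1))) ⁻¹' {false} ∪
            (fun y : ℕ → Bool => y (Nat.pair n k)) ⁻¹' {true}) := by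
        ext y
        simp only [Set.mem_setOf_eq, Set.mem_iInter, Set.mem_union, Set.mem_preimage,
          Set.mem_singleton_iff]
        constructor
        · intro h k
          by_cases hk : y (Nat.pair n (k + 1)) = true
          · exact Or.inr (h k hk)
          · exact Or.inl (by simpa using hk)
        · intro h k hk
          rcases h k with h' | h'
          · rw [hk] at h'; exact Bool.noConfusion h'
          · exact h'
      rw [this]
      exact isClosed_iInter fun k => IsClosed.union
        (IsClosed.preimage (continuous_apply _) (isClosed_discrete _))
        (IsClosed.preimage (continuous_apply _) (isClosed_discrete _))
    exact hcl.isGδ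
  · refine IsOpen.isGδ ?_
    have : {y : ℕ → Bool | ∃ k, y (Nat.pair n k) = false} =
        ⋃ k : ℕ, (fun y : ℕ → Bool => y (Nat.pair n k)) ⁻¹' {false} := by
      ext y; simp
    rw [this]
    exact isOpen_iUnion fun k => IsOpen.preimage (continuous_apply _) (isOpen_discrete _)

lemma mem_S_true (y : ℕ → Bool) (hy : y ∈ S) {n k : ℕ} (hk : k < dec y n) :
    y (Nat.pair n k) = true := by
  by_contra h
  have h' : y (Nat.pair n k) = false := by simpa using h
  exact absurd (Nat.sInf_le h') (not_le_of_gt hk)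

lemma mem_S_false (y : ℕ → Bool) (hy : y ∈ S) (n : ℕ) :
    y (Nat.pair n (dec y n)) = false := by
  have hne : {k | y (Nat.pair n k) = false}.Nonempty := (hy n).2
  exact Nat.sInf_mem hne

lemma dec_continuousOn : ContinuousOn dec S := by
  intro y hy
  rw [ContinuousWithinAt, tendsto_pi_nhds]
  intro n
  set a := dec y n with ha
  have hU : IsOpen {z : ℕ → Bool | ∀ k : Fin (a + 1), z (Nat.pair n k) = y (Nat.pair n k)} := by
    have : {z : ℕ → Bool | ∀ k : Fin (a + 1), z (Nat.pair n k) = y (Nat.pair n k)} =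
        ⋂ k : Fin (a + 1), (fun z : ℕ → Bool => z (Nat.pair n k)) ⁻¹' {y (Nat.pair n k)} := by
      ext z; simp
    rw [this]
    exact isOpen_iInter_of_finite fun k =>
      IsOpen.preimage (continuous_apply _) (isOpen_discrete _)
  have hyU : y ∈ {z : ℕ → Bool | ∀ k : Fin (a + 1), z (Nat.pair n k) = y (Nat.pair n k)} :=
    fun _ => rfl
  have hmem : {z : ℕ → Bool | ∀ k : Fin (a + 1), z (Nat.pair n k) = y (Nat.pair n k)} ∩ S
      ∈ 𝓝[S] y :=
    Filter.inter_mem (mem_nhdsWithin_of_mem_nhds (hU.mem_nhds hyU)) self_mem_nhdsWithin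
  have heq : ∀ z ∈ {z : ℕ → Bool | ∀ k : Fin (a + 1), z (Nat.pair n k) = y (Nat.pair n k)} ∩ S,
      dec z n = a := by
    rintro z ⟨hzU, hzS⟩
    refine dec_eq z n a (fun k hk => ?_) ?_
    · rw [hzU ⟨k, by omega⟩]
      exact mem_S_true y hy hk
    · rw [hzU ⟨a, by omega⟩]
      exact mem_S_false y hy n
  have : Tendsto (fun z => dec z n) (𝓝[S] y) (𝓝 a) := by
    refine Filter.Tendsto.congr' ?_ tendsto_const_nhds
    filter_upwards [hmem] with z hz
    exact (heq z hz).symm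
  exact this

lemma isGδ_preimage {α β : Type*} [TopologicalSpace α] [TopologicalSpace β] {f : α → β}
    (hf : Continuous f) {s : Set β} (hs : IsGδ s) : IsGδ (f ⁻¹' s) := by
  obtain ⟨T, hT, hTc, rfl⟩ := hs
  rw [Set.preimage_sInter]
  exact IsGδ.biInter hTc fun t ht => ((hT t ht).preimage hf).isGδ

/-- The key construction: given a subset `Z` of Cantor space and a continuous surjection
from `Z` to `X`, build the invariant set `Y` together with the equivariant map. -/
theorem key (G : Type*) [Group G] (X : Type) [TopologicalSpace X] [T2Space X] [MulAction G X]
    (hcont : ∀ g : G, Continuous fun x : X => g • x)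
    (Z : Set (ℕ → Bool)) (π : (ℕ → Bool) → X) (hπ : ContinuousOn π Z)
    (hs : ∀ x : X, ∃ z ∈ Z, π z = x) :
    ∃ Y : Set (G → (ℕ → Bool)),
      (∃ F : Set (G → (ℕ → Bool)), IsClosed F ∧ Y = {x | ∀ g : G, x g ∈ Z} ∩ F) ∧
      (∀ (g : G) (x : G → (ℕ → Bool)), x ∈ Y → bshift (ℕ → Bool) g x ∈ Y) ∧
      ∃ φ : Y → X, Continuous φ ∧ Function.Surjective φ ∧
        ∀ (g : G) (x : G → (ℕ → Bool)) (hx : x ∈ Y) (hgx : bshift (ℕ → Bool) g x ∈ Y),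
          φ ⟨bshift (ℕ → Bool) g x, hgx⟩ = g • φ ⟨x, hx⟩ := by
  classical
  set T : Set (G → (ℕ → Bool)) := {x | ∀ g : G, x g ∈ Z} with hT
  set Y : Set (G → (ℕ → Bool)) :=
    {x | (∀ g : G, x g ∈ Z) ∧ ∀ g : G, π (x g) = g⁻¹ • π (x 1)} with hY
  have hcontg : ∀ g : G, Continuous fun t : T => π (t.1 g) := by
    intro g
    exact hπ.comp_continuous ((continuous_apply g).comp continuous_subtype_val)
      fun t => t.2 g
  -- Y is the intersection of T with a closed set
  have hclosed : ∃ F : Set (G → (ℕ → Bool)), IsClosed F ∧ Y = T ∩ F := by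
    have hC : IsClosed {t : T | ∀ g : G, π (t.1 g) = g⁻¹ • π (t.1 1)} := by
      have : {t : T | ∀ g : G, π (t.1 g) = g⁻¹ • π (t.1 1)} =
          ⋂ g : G, (fun t : T => (π (t.1 g), g⁻¹ • π (t.1 1))) ⁻¹' {p : X × X | p.1 = p.2} := by
        ext t; simp
      rw [this]
      refine isClosed_iInter fun g => IsClosed.preimage ?_ isClosed_diagonal
      exact (hcontg g).prodMk ((hcont g⁻¹).comp (hcontg 1))
    obtain ⟨F, hF, hFeq⟩ := isClosed_induced_iff.mp hC
    refine ⟨F, hF, ?_⟩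
    ext x
    constructor
    · rintro ⟨h1, h2⟩
      refine ⟨h1, ?_⟩
      have : (⟨x, h1⟩ : T) ∈ Subtype.val ⁻¹' F := by rw [hFeq]; exact h2
      exact this
    · rintro ⟨h1, h2⟩
      refine ⟨h1, ?_⟩
      have : (⟨x, h1⟩ : T) ∈ Subtype.val ⁻¹' F := h2
      rw [hFeq] at this
      exact this
  -- invariance
  have hinv : ∀ (g : G) (x : G → (ℕ → Bool)), x ∈ Y → bshift (ℕ → Bool) g x ∈ Y := by
    rintro g x ⟨h1, h2⟩
    refine ⟨fun h => h1 _, fun h => ?_⟩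
    show π (x (g⁻¹ * h)) = h⁻¹ • π (x (g⁻¹ * 1))
    rw [h2 (g⁻¹ * h), h2 (g⁻¹ * 1)]
    rw [mul_one, mul_inv_rev, inv_inv, mul_smul]
  -- the map
  refine ⟨Y, hclosed, hinv, fun y => π (y.1 1), ?_, ?_, ?_⟩
  · exact hπ.comp_continuous ((continuous_apply (1 : G)).comp continuous_subtype_val)
      fun y => y.2.1 1
  · intro x
    have : ∀ g : G, ∃ z ∈ Z, π z = g⁻¹ • x := fun g => hs (g⁻¹ • x)
    choose z hz hπz using this
    have hzY : z ∈ Y := by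
      refine ⟨hz, fun g => ?_⟩
      rw [hπz g, hπz 1, inv_one, one_smul]
    refine ⟨⟨z, hzY⟩, ?_⟩
    show π (z 1) = x
    rw [hπz 1, inv_one, one_smul]
  · rintro g x hx hgx
    show π (x (g⁻¹ * 1)) = g • π (x 1)
    rw [mul_one, hx.2 g⁻¹, inv_inv]

end Stmt18Aux

open Stmt18Aux in
theorem stmt18 (G : Type*) [Group G] [Countable G]
    (X : Type) [TopologicalSpace X] [PolishSpace X] [MulAction G X]
    (hcont : ∀ g : G, Continuous fun x : X => g • x) :
    (∃ Y : Set (G → (ℕ → Bool)), IsGδ Y ∧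
      (∀ (g : G) (x : G → (ℕ → Bool)), x ∈ Y → bshift (ℕ → Bool) g x ∈ Y) ∧
      ∃ φ : Y → X, Continuous φ ∧ Function.Surjective φ ∧
        ∀ (g : G) (x : G → (ℕ → Bool)) (hx : x ∈ Y) (hgx : bshift (ℕ → Bool) g x ∈ Y),
          φ ⟨bshift (ℕ → Bool) g x, hgx⟩ = g • φ ⟨x, hx⟩) ∧
    -- furthermore, if X is compact then Y can be chosen to be compact
    (CompactSpace X →
      ∃ Y : Set (G → (ℕ → Bool)), IsCompact Y ∧
        (∀ (g : G) (x : G → (ℕ → Bool)), x ∈ Y → bshift (ℕ → Bool) g x ∈ Y) ∧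
        ∃ φ : Y → X, Continuous φ ∧ Function.Surjective φ ∧
          ∀ (g : G) (x : G → (ℕ → Bool)) (hx : x ∈ Y) (hgx : bshift (ℕ → Bool) g x ∈ Y),
            φ ⟨bshift (ℕ → Bool) g x, hgx⟩ = g • φ ⟨x, hx⟩) := by
  classical
  rcases isEmpty_or_nonempty X with hX | hX
  · -- trivial case: X empty
    have hempty : ∃ Y : Set (G → (ℕ → Bool)), Y = ∅ ∧
        (∀ (g : G) (x : G → (ℕ → Bool)), x ∈ Y → bshift (ℕ → Bool) g x ∈ Y) ∧
        ∃ φ : Y → X, Continuous φ ∧ Function.Surjective φ ∧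
          ∀ (g : G) (x : G → (ℕ → Bool)) (hx : x ∈ Y) (hgx : bshift (ℕ → Bool) g x ∈ Y),
            φ ⟨bshift (ℕ → Bool) g x, hgx⟩ = g • φ ⟨x, hx⟩ := by
      refine ⟨∅, rfl, fun g x hx => absurd hx (Set.notMem_empty x), ?_⟩
      haveI : IsEmpty (↥(∅ : Set (G → (ℕ → Bool)))) := by
        constructor; rintro ⟨x, hx⟩; exact Set.notMem_empty x hx
      refine ⟨fun y => (IsEmpty.false y).elim, ?_, ?_, ?_⟩
      · rw [continuous_iff_continuousAt]; intro y; exact (IsEmpty.false y).elim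
      · intro x; exact (hX.false x).elim
      · intro g x hx; exact (Set.notMem_empty x hx).elim
    obtain ⟨Y, hYe, hinv, hφ⟩ := hempty
    constructor
    · exact ⟨Y, by rw [hYe]; exact IsGδ.empty, hinv, hφ⟩
    · intro _
      exact ⟨Y, by rw [hYe]; exact isCompact_empty, hinv, hφ⟩
  · -- X nonempty
    obtain ⟨f, hfc, hfs⟩ := PolishSpace.exists_nat_nat_continuous_surjective X
    constructor
    · -- Gδ part
      obtain ⟨Y, ⟨F, hF, hYeq⟩, hinv, hφ⟩ := key G X hcont S (f ∘ dec)
        (hfc.comp_continuousOn dec_continuousOn)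
        (fun x => by
          obtain ⟨a, ha⟩ := hfs x
          exact ⟨enc a, enc_mem a, by simp [Function.comp, dec_enc, ha]⟩)
      refine ⟨Y, ?_, hinv, hφ⟩
      rw [hYeq]
      refine IsGδ.inter ?_ hF.isGδ
      have : {x : G → (ℕ → Bool) | ∀ g : G, x g ∈ S} =
          ⋂ g : G, (fun x : G → (ℕ → Bool) => x g) ⁻¹' S := by ext x; simp
      rw [this]
      exact IsGδ.iInter fun g => isGδ_preimage (continuous_apply g) isGδ_S
    · -- compact part
      intro hcomp
      letI := TopologicalSpace.upgradeIsCompletelyMetrizable X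
      obtain ⟨u, hu⟩ := TopologicalSpace.exists_dense_seq X
      have hcover : ∀ n : ℕ, ∃ N : ℕ, ∀ x : X, ∃ i ≤ N, dist x (u i) < (1/2 : ℝ) ^ n := by
        intro n
        have hpos : (0 : ℝ) < (1/2 : ℝ) ^ n := by positivity
        obtain ⟨t, ht⟩ := isCompact_univ.elim_finite_subcover
          (fun i : ℕ => Metric.ball (u i) ((1/2 : ℝ) ^ n)) (fun i => Metric.isOpen_ball)
          (fun x _ => by
            obtain ⟨i, hi⟩ := (Metric.denseRange_iff.mp hu) x _ hpos
            exact Set.mem_iUnion.mpr ⟨i, by simpa [Metric.mem_ball, dist_comm] using hi⟩)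
        refine ⟨t.sup id, fun x => ?_⟩
        obtain ⟨i, hit, hix⟩ := Set.mem_iUnion₂.mp (ht (Set.mem_univ x))
        exact ⟨i, Finset.le_sup (f := id) hit, by simpa [Metric.mem_ball] using hix⟩
      choose N hN using hcover
      set A : Set (ℕ → ℕ) := {a | ∀ n, a n ≤ N n ∧
        dist (u (a n)) (u (a (n + 1))) ≤ 2 * (1/2 : ℝ) ^ n} with hA
      have hcauchy : ∀ a ∈ A, CauchySeq (fun n => u (a n)) := fun a ha =>
        cauchySeq_of_le_geometric (1/2 : ℝ) 2 (by norm_num) (fun n => (ha n).2)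
      set fc : (ℕ → ℕ) → X := fun a => limUnder atTop (fun n => u (a n)) with hfc'
      have htends : ∀ a ∈ A, Tendsto (fun n => u (a n)) atTop (𝓝 (fc a)) := fun a ha =>
        (hcauchy a ha).tendsto_limUnder
      -- chain estimate
      have hchain : ∀ a ∈ A, ∀ n m, n ≤ m →
          dist (u (a n)) (u (a m)) ≤ 4 * (1/2 : ℝ) ^ n - 4 * (1/2 : ℝ) ^ m := by
        intro a ha n m hnm
        induction m, hnm using Nat.le_induction with
        | base => simp
        | succ m hnm ih =>
          have h1 := (ha m).2
          have h2 : (1/2 : ℝ) ^ (m + 1) = (1/2 : ℝ) ^ m * (1/2) := pow_succ _ _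
          calc dist (u (a n)) (u (a (m + 1)))
              ≤ dist (u (a n)) (u (a m)) + dist (u (a m)) (u (a (m + 1))) := dist_triangle _ _ _
            _ ≤ (4 * (1/2 : ℝ) ^ n - 4 * (1/2 : ℝ) ^ m) + 2 * (1/2 : ℝ) ^ m := by linarith
            _ = 4 * (1/2 : ℝ) ^ n - 4 * (1/2 : ℝ) ^ (m + 1) := by rw [h2]; ring
      have hdistlim : ∀ a ∈ A, ∀ n, dist (u (a n)) (fc a) ≤ 4 * (1/2 : ℝ) ^ n := by
        intro a ha n
        refine le_of_tendsto (tendsto_const_nhds.dist (htends a ha)) ?_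
        filter_upwards [eventually_ge_atTop n] with m hm
        have hp : (0 : ℝ) < (1/2 : ℝ) ^ m := by positivity
        linarith [hchain a ha n m hm]
      -- continuity of fc on A
      have hfcont : ContinuousOn fc A := by
        intro a ha
        rw [ContinuousWithinAt, Metric.tendsto_nhds]
        intro ε hε
        obtain ⟨n, hn⟩ := exists_pow_lt_of_lt_one (show (0:ℝ) < ε/8 by linarith)
          (show (1/2 : ℝ) < 1 by norm_num)
        have hU : IsOpen {b : ℕ → ℕ | b n = a n} := by
          have he : {b : ℕ → ℕ | b n = a n} = (fun b : ℕ → ℕ => b n) ⁻¹' {a n} := rfl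
          rw [he]; exact IsOpen.preimage (continuous_apply n) (isOpen_discrete _)
        have hmem : {b : ℕ → ℕ | b n = a n} ∩ A ∈ 𝓝[A] a :=
          Filter.inter_mem (mem_nhdsWithin_of_mem_nhds (hU.mem_nhds rfl)) self_mem_nhdsWithin
        filter_upwards [hmem]
        rintro b ⟨hbn, hbA⟩
        have h1 := hdistlim b hbA n
        have h2 := hdistlim a ha n
        have : dist (fc b) (fc a) ≤ dist (fc b) (u (b n)) + dist (u (a n)) (fc a) := by
          rw [hbn]; exact dist_triangle _ _ _
        rw [dist_comm] at h1
        linarith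
      -- surjectivity
      have hfsurj : ∀ x : X, ∃ a ∈ A, fc a = x := by
        intro x
        have : ∀ n, ∃ i, i ≤ N n ∧ dist x (u i) < (1/2 : ℝ) ^ n := by
          intro n; obtain ⟨i, h1, h2⟩ := hN n x; exact ⟨i, h1, h2⟩
        choose a haN had using this
        have haA : a ∈ A := by
          intro n
          refine ⟨haN n, ?_⟩
          have h1 := had n
          have h2 := had (n + 1)
          have h3 : dist (u (a n)) (u (a (n + 1))) ≤ dist (u (a n)) x + dist x (u (a (n+1))) :=
            dist_triangle _ _ _
          rw [dist_comm] at h1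
          have h4 : (1/2 : ℝ) ^ (n + 1) = (1/2 : ℝ) ^ n * (1/2) := pow_succ _ _
          have hp : (0 : ℝ) < (1/2 : ℝ) ^ n := by positivity
          nlinarith
        refine ⟨a, haA, ?_⟩
        have htend2 : Tendsto (fun n => u (a n)) atTop (𝓝 x) := by
          rw [tendsto_iff_dist_tendsto_zero]
          refine squeeze_zero (g := fun n => (1/2 : ℝ) ^ n) (fun n => dist_nonneg) (fun n => (le_of_lt ?_)) ?_
          · rw [dist_comm]; exact had n
          · exact tendsto_pow_atTop_nhds_zero_of_lt_one (by norm_num) (by norm_num)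
        exact tendsto_nhds_unique (htends a haA) htend2
      -- A is compact
      have hAcomp : IsCompact A := by
        refine IsCompact.of_isClosed_subset
          (isCompact_univ_pi (fun n => (Set.finite_Iic (N n)).isCompact)) ?_ ?_
        · have : A = ⋂ n : ℕ, ((fun b : ℕ → ℕ => b n) ⁻¹' Set.Iic (N n) ∩
              {b : ℕ → ℕ | dist (u (b n)) (u (b (n + 1))) ≤ 2 * (1/2 : ℝ) ^ n}) := by
            ext b; simp [hA, forall_and, Set.mem_iInter]
          rw [this]
          refine isClosed_iInter fun n => IsClosed.inter
            (IsClosed.preimage (continuous_apply n) (isClosed_discrete _)) ?_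
          refine isClosed_le ?_ continuous_const
          exact Continuous.dist
            ((continuous_of_discreteTopology (f := u)).comp (continuous_apply n))
            ((continuous_of_discreteTopology (f := u)).comp (continuous_apply (n + 1)))
        · intro b hb
          rw [Set.mem_univ_pi]
          exact fun n => (hb n).1
      -- assemble via the key lemma with Z := enc '' A
      have hsub : enc '' A ⊆ S := by rintro _ ⟨a, _, rfl⟩; exact enc_mem a
      have hmaps : Set.MapsTo dec (enc '' A) A := by
        rintro _ ⟨a, ha, rfl⟩; rw [dec_enc]; exact ha
      obtain ⟨Y, ⟨F, hF, hYeq⟩, hinv, hφ⟩ := key G X hcont (enc '' A) (fc ∘ dec)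
        (ContinuousOn.comp hfcont (dec_continuousOn.mono hsub) hmaps)
        (fun x => by
          obtain ⟨a, haA, ha⟩ := hfsurj x
          exact ⟨enc a, Set.mem_image_of_mem _ haA, by simp [Function.comp, dec_enc, ha]⟩)
      refine ⟨Y, ?_, hinv, hφ⟩
      rw [hYeq]
      have hZcomp : IsCompact (enc '' A) := hAcomp.image enc_continuous
      have hTcomp : IsCompact {x : G → (ℕ → Bool) | ∀ g : G, x g ∈ enc '' A} := by
        have : {x : G → (ℕ → Bool) | ∀ g : G, x g ∈ enc '' A} =
            Set.pi Set.univ (fun _ : G => enc '' A) := by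
          ext x; simp [Set.mem_univ_pi]
        rw [this]
        exact isCompact_univ_pi fun _ => hZcomp
      exact hTcomp.inter_right hF
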